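/- Let m ∈ L^q(Ω) with m ≥ 0 and w ∈ L^1(Ω; ℝ^d) with w = 0 a.e. on {m = 0}, and suppose ∫_{m>0} |w|^{r'} / m^{r'-1} < ∞. Then w ∈ L^{s}(Ω; ℝ^d) where s = r'q/(r'+q-1), and ‖w‖_{L^s}^s ≤ ‖m‖_{L^q}^{(r'-1)q/(r'+q-1)} · (∫_{m>0} |w|^{r'}/m^{r'-1})^{q/(r'+q-1)}. -/

import Mathlib

open MeasureTheory
open scoped ENNReal NNReal

/-- Hölder estimate: if `m ∈ L^q`, `m ≥ 0`, `w` vanishes where `m` does, and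
`∫ |w|^{r'}/m^{r'-1} < ∞`, then `w ∈ L^s` with `s = r'q/(r'+q-1)` and the
corresponding norm estimate holds. -/
theorem drift_integrability
    {Ω : Type*} [MeasurableSpace Ω] (μ : Measure Ω) [IsFiniteMeasure μ]
    (d : ℕ) (m : Ω → ℝ) (w : Ω → EuclideanSpace ℝ (Fin d))
    (r' q : ℝ) (hr' : 1 < r') (hq : 1 < q)
    (hm0 : ∀ᵐ x ∂μ, 0 ≤ m x)
    (hmq : MemLp m (ENNReal.ofReal q) μ)
    (hw : AEStronglyMeasurable w μ)
    (hw0 : ∀ᵐ x ∂μ, m x = 0 → w x = 0)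
    (hfin : IntegrableOn (fun x => ‖w x‖ ^ r' / m x ^ (r' - 1)) {x | 0 < m x} μ) :
    MemLp w (ENNReal.ofReal (r' * q / (r' + q - 1))) μ ∧
    (∫ x, ‖w x‖ ^ (r' * q / (r' + q - 1)) ∂μ) ≤
      (∫ x, |m x| ^ q ∂μ) ^ ((r' - 1) / (r' + q - 1)) *
        (∫ x in {x | 0 < m x}, ‖w x‖ ^ r' / m x ^ (r' - 1) ∂μ) ^ (q / (r' + q - 1)) := by
  set s : ℝ := r' * q / (r' + q - 1) with hs_def
  have hden : (0:ℝ) < r' + q - 1 := by linarith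
  have hr0 : (0:ℝ) < r' := by linarith
  have hq0 : (0:ℝ) < q := by linarith
  have hr1 : (0:ℝ) < r' - 1 := by linarith
  have hs_pos : 0 < s := by positivity
  have hα_pos : 0 < q / (r' + q - 1) := by positivity
  have hβ_pos : 0 < (r' - 1) * q / (r' + q - 1) := by positivity
  -- measurable representatives
  obtain ⟨M, hM, hMm⟩ := hmq.1
  obtain ⟨W, hW, hWw⟩ := hw
  have hSmeas : MeasurableSet {x | 0 < M x} := measurableSet_lt measurable_const hM.measurable
  set S := {x | 0 < M x} with hS_def
  have hset : {x | 0 < m x} =ᵐ[μ] S := by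
    rw [Filter.eventuallyEq_set]
    filter_upwards [hMm] with x hx
    simp [hS_def, Set.mem_setOf_eq, hx]
  have hrestrict : μ.restrict {x | 0 < m x} = μ.restrict S :=
    Measure.restrict_congr_set hset
  have horig_eq : (fun x => ‖w x‖ ^ r' / m x ^ (r' - 1))
      =ᵐ[μ] (fun x => ‖W x‖ ^ r' / M x ^ (r' - 1)) := by
    filter_upwards [hMm, hWw] with x h1 h2
    rw [h1, h2]
  -- the indicator function
  set f : Ω → ℝ := S.indicator (fun x => ‖W x‖ ^ r' / M x ^ (r' - 1)) with hf_def
  have hf_nonneg : ∀ x, 0 ≤ f x := by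
    intro x
    apply Set.indicator_nonneg
    intro y hy
    exact div_nonneg (Real.rpow_nonneg (norm_nonneg _) _)
      (Real.rpow_nonneg (le_of_lt hy) _)
  have hfon : IntegrableOn (fun x => ‖W x‖ ^ r' / M x ^ (r' - 1)) S μ := by
    rw [IntegrableOn, ← hrestrict]
    exact hfin.congr (ae_restrict_of_ae horig_eq)
  have hfint : Integrable f μ := by
    rw [hf_def, integrable_indicator_iff hSmeas]
    exact hfon
  have hI_eq : (∫ x in {x | 0 < m x}, ‖w x‖ ^ r' / m x ^ (r' - 1) ∂μ) = ∫ x, f x ∂μ := by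
    calc (∫ x in {x | 0 < m x}, ‖w x‖ ^ r' / m x ^ (r' - 1) ∂μ)
        = ∫ x in S, ‖w x‖ ^ r' / m x ^ (r' - 1) ∂μ := by rw [hrestrict]
      _ = ∫ x in S, ‖W x‖ ^ r' / M x ^ (r' - 1) ∂μ :=
          integral_congr_ae (ae_restrict_of_ae horig_eq)
      _ = ∫ x, f x ∂μ := (integral_indicator hSmeas).symm
  -- lintegral A
  set A : ℝ≥0∞ := ∫⁻ x, ENNReal.ofReal (f x) ∂μ with hA_def
  have hA : A = ENNReal.ofReal (∫ x, f x ∂μ) :=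
    (ofReal_integral_eq_lintegral_ofReal hfint (Filter.Eventually.of_forall hf_nonneg)).symm
  have hA_top : A ≠ ⊤ := by rw [hA]; exact ENNReal.ofReal_ne_top
  -- lintegral B
  have hq_toReal : (ENNReal.ofReal q).toReal = q := ENNReal.toReal_ofReal hq0.le
  have hmq_int : Integrable (fun x => |m x| ^ q) μ := by
    have h := hmq.integrable_norm_rpow (by simp [ENNReal.ofReal_eq_zero]; linarith)
      ENNReal.ofReal_ne_top
    rw [hq_toReal] at h
    simpa [Real.norm_eq_abs] using h
  set B : ℝ≥0∞ := ∫⁻ x, ENNReal.ofReal (M x) ^ q ∂μ with hB_def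
  have hB : B = ENNReal.ofReal (∫ x, |m x| ^ q ∂μ) := by
    have h1 : B = ∫⁻ x, ENNReal.ofReal (|m x| ^ q) ∂μ := by
      apply lintegral_congr_ae
      filter_upwards [hMm, hm0] with x hx h0
      rw [ENNReal.ofReal_rpow_of_nonneg (by rw [← hx]; exact h0) hq0.le, ← hx,
        abs_of_nonneg h0]
    rw [h1, ofReal_integral_eq_lintegral_ofReal hmq_int
      (Filter.Eventually.of_forall fun x => Real.rpow_nonneg (abs_nonneg _) _)]
  have hB_top : B ≠ ⊤ := by rw [hB]; exact ENNReal.ofReal_ne_top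
  -- conjugate exponents
  have hpq : Real.HolderConjugate ((r' + q - 1) / q) ((r' + q - 1) / (r' - 1)) := by
    rw [Real.holderConjugate_iff]
    constructor
    · rw [lt_div_iff₀ hq0]; linarith
    · rw [← one_div, ← one_div, one_div_div, one_div_div]
      field_simp
      ring
  -- the two factors
  set F : Ω → ℝ≥0∞ := fun x => ENNReal.ofReal (f x) ^ (q / (r' + q - 1)) with hF_def
  set G : Ω → ℝ≥0∞ := fun x => ENNReal.ofReal (M x) ^ ((r' - 1) * q / (r' + q - 1)) with hG_def
  have hf_meas : Measurable f := by
    apply Measurable.indicator _ hSmeas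
    exact ((hW.measurable.norm).pow_const _).div (hM.measurable.pow_const _)
  have hF_meas : Measurable F := (ENNReal.measurable_ofReal.comp hf_meas).pow_const _
  have hG_meas : Measurable G := (ENNReal.measurable_ofReal.comp hM.measurable).pow_const _
  have hF_pow : ∀ x, F x ^ ((r' + q - 1) / q) = ENNReal.ofReal (f x) := by
    intro x
    rw [hF_def, ← ENNReal.rpow_mul]
    have : q / (r' + q - 1) * ((r' + q - 1) / q) = 1 := by field_simp
    rw [this, ENNReal.rpow_one]
  have hG_pow : ∀ x, G x ^ ((r' + q - 1) / (r' - 1)) = ENNReal.ofReal (M x) ^ q := by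
    intro x
    rw [hG_def, ← ENNReal.rpow_mul]
    congr 1
    field_simp
  -- Hölder
  have hHolder : (∫⁻ x, (F * G) x ∂μ) ≤ A ^ (q / (r' + q - 1)) * B ^ ((r' - 1) / (r' + q - 1)) := by
    have h := ENNReal.lintegral_mul_le_Lp_mul_Lq μ hpq hF_meas.aemeasurable hG_meas.aemeasurable
    have e1 : (∫⁻ x, F x ^ ((r' + q - 1) / q) ∂μ) = A := by
      rw [hA_def]; exact lintegral_congr hF_pow
    have e2 : (∫⁻ x, G x ^ ((r' + q - 1) / (r' - 1)) ∂μ) = B := by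
      rw [hB_def]; exact lintegral_congr hG_pow
    rw [e1, e2, one_div_div, one_div_div] at h
    exact h
  -- key pointwise identity
  have hkey : ∀ᵐ x ∂μ, ENNReal.ofReal (‖w x‖ ^ s) = (F * G) x := by
    filter_upwards [hm0, hw0, hMm, hWw] with x hx0 hx1 hxM hxW
    rcases eq_or_lt_of_le hx0 with h | h
    · have hwx : w x = 0 := hx1 h.symm
      have hMx : M x = 0 := by rw [← hxM, ← h]
      have hG0 : G x = 0 := by
        rw [hG_def]
        simp only [hMx, ENNReal.ofReal_zero]
        exact ENNReal.zero_rpow_of_pos hβ_pos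
      simp [hwx, hG0, Real.zero_rpow hs_pos.ne']
    · have hMx : 0 < M x := by rw [← hxM]; exact h
      have hxS : x ∈ S := hMx
      have hfx : f x = ‖W x‖ ^ r' / M x ^ (r' - 1) := Set.indicator_of_mem hxS _
      have hdnn : 0 ≤ ‖W x‖ ^ r' / M x ^ (r' - 1) :=
        div_nonneg (Real.rpow_nonneg (norm_nonneg _) _) (Real.rpow_nonneg hMx.le _)
      show ENNReal.ofReal (‖w x‖ ^ s)
          = ENNReal.ofReal (f x) ^ (q / (r' + q - 1))
            * ENNReal.ofReal (M x) ^ ((r' - 1) * q / (r' + q - 1))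
      rw [hfx, ENNReal.ofReal_rpow_of_nonneg hdnn hα_pos.le,
        ENNReal.ofReal_rpow_of_nonneg hMx.le hβ_pos.le,
        ← ENNReal.ofReal_mul (Real.rpow_nonneg hdnn _)]
      congr 1
      rw [Real.div_rpow (Real.rpow_nonneg (norm_nonneg _) _) (Real.rpow_nonneg hMx.le _),
        ← Real.rpow_mul (norm_nonneg _), ← Real.rpow_mul hMx.le]
      have e1 : r' * (q / (r' + q - 1)) = s := by rw [hs_def]; ring
      have e2 : (r' - 1) * (q / (r' + q - 1)) = (r' - 1) * q / (r' + q - 1) := by ring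
      rw [e1, e2, hxW]
      exact (div_mul_cancel₀ _ (ne_of_gt (Real.rpow_pos_of_pos hMx _))).symm
  have hL : (∫⁻ x, ENNReal.ofReal (‖w x‖ ^ s) ∂μ)
      ≤ A ^ (q / (r' + q - 1)) * B ^ ((r' - 1) / (r' + q - 1)) := by
    rw [lintegral_congr_ae hkey]; exact hHolder
  have hRHS_top : A ^ (q / (r' + q - 1)) * B ^ ((r' - 1) / (r' + q - 1)) ≠ ⊤ :=
    ENNReal.mul_ne_top (ENNReal.rpow_ne_top_of_nonneg hα_pos.le hA_top)
      (ENNReal.rpow_ne_top_of_nonneg (by positivity) hB_top)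
  have hlw : (∫⁻ x, ‖w x‖ₑ ^ s ∂μ) = ∫⁻ x, ENNReal.ofReal (‖w x‖ ^ s) ∂μ := by
    apply lintegral_congr
    intro x
    rw [← ENNReal.ofReal_rpow_of_nonneg (norm_nonneg _) hs_pos.le, ofReal_norm]
  have hwmem : MemLp w (ENNReal.ofReal s) μ := by
    refine ⟨⟨W, hW, hWw⟩, ?_⟩
    rw [eLpNorm_eq_lintegral_rpow_enorm_toReal (by simp [ENNReal.ofReal_eq_zero]; linarith)
      ENNReal.ofReal_ne_top, ENNReal.toReal_ofReal hs_pos.le]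
    apply ENNReal.rpow_lt_top_of_nonneg (by positivity)
    rw [hlw]
    exact ne_top_of_le_ne_top hRHS_top hL
  refine ⟨hwmem, ?_⟩
  have hws_meas : AEStronglyMeasurable (fun x => ‖w x‖ ^ s) μ := by
    refine AEStronglyMeasurable.congr ?_ (by filter_upwards [hWw] with x hx; rw [hx])
    exact ((hW.measurable.norm).pow_const _).aestronglyMeasurable
  have hint_eq : (∫ x, ‖w x‖ ^ s ∂μ) = (∫⁻ x, ENNReal.ofReal (‖w x‖ ^ s) ∂μ).toReal :=
    integral_eq_lintegral_of_nonneg_ae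
      (Filter.Eventually.of_forall fun x => Real.rpow_nonneg (norm_nonneg _) _) hws_meas
  have hAnn : (0:ℝ) ≤ ∫ x, f x ∂μ := integral_nonneg hf_nonneg
  have hBnn : (0:ℝ) ≤ ∫ x, |m x| ^ q ∂μ :=
    integral_nonneg fun x => Real.rpow_nonneg (abs_nonneg _) _
  calc (∫ x, ‖w x‖ ^ s ∂μ)
      = (∫⁻ x, ENNReal.ofReal (‖w x‖ ^ s) ∂μ).toReal := hint_eq
    _ ≤ (A ^ (q / (r' + q - 1)) * B ^ ((r' - 1) / (r' + q - 1))).toReal :=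
        ENNReal.toReal_mono hRHS_top hL
    _ = A.toReal ^ (q / (r' + q - 1)) * B.toReal ^ ((r' - 1) / (r' + q - 1)) := by
        rw [ENNReal.toReal_mul, ENNReal.toReal_rpow, ENNReal.toReal_rpow]
    _ = (∫ x, |m x| ^ q ∂μ) ^ ((r' - 1) / (r' + q - 1)) *
        (∫ x in {x | 0 < m x}, ‖w x‖ ^ r' / m x ^ (r' - 1) ∂μ) ^ (q / (r' + q - 1)) := by
        rw [hA, hB, ENNReal.toReal_ofReal hAnn, ENNReal.toReal_ofReal hBnn, hI_eq, mul_comm]
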